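/- For any two points P, P′ ∈ ℍ × Im ℍ there exists a piecewise-C¹ horizontal curve γ : [0,1] → ℍ × Im ℍ with γ(0) = P and γ(1) = P′. -/

import Mathlib

open Quaternion Set

/-- The horizontality condition at a point of differentiability:
`β′(l) = −2 Im(α′(l) · conj(α(l)))`. -/
def HorizontalAt (α β : ℝ → ℍ[ℝ]) (l : ℝ) : Prop :=
  ∃ a' b' : ℍ[ℝ], HasDerivAt α a' l ∧ HasDerivAt β b' l ∧
    b' = (-2 : ℝ) • Quaternion.im (a' * star (α l))

/-- A piecewise-C¹ horizontal curve `(α, β) : [a, b] → ℍ × Im ℍ`: it is continuous,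
takes vertical values in the imaginary quaternions, and away from a finite set of
points it is differentiable with continuous derivative and satisfies the
horizontality condition. -/
def IsPiecewiseHorizontal (α β : ℝ → ℍ[ℝ]) (a b : ℝ) : Prop :=
  ContinuousOn (fun l => (α l, β l)) (Icc a b) ∧
  (∀ l ∈ Icc a b, (β l).re = 0) ∧
  ∃ F : Finset ℝ,
    (∀ l ∈ Icc a b, l ∉ F → HorizontalAt α β l) ∧
    ContinuousOn (fun l => deriv α l) (Icc a b \ F)

open Real

lemma quat_smul_one_coe (r : ℝ) : r • (1:ℍ[ℝ]) = (r:ℍ[ℝ]) := by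
  rw [← Quaternion.coe_one, ← Quaternion.coe_smul, smul_eq_mul, mul_one]

/-- Expansion of a product in the plane spanned by `1` and a unit imaginary `u`. -/
lemma quat_mul_expand (a₁ a₂ p q : ℝ) (c u : ℍ[ℝ]) (hu : u * u = -1) :
    (a₁•(1:ℍ[ℝ]) + a₂•u) * (c + p•(1:ℍ[ℝ]) - q•u) =
    a₁•c + a₂•(u*c) + ((a₁*p + a₂*q) : ℝ)•(1:ℍ[ℝ]) + ((a₂*p - a₁*q) : ℝ)•u := by
  simp only [add_mul, mul_add, mul_sub, smul_mul_assoc, mul_smul_comm, one_mul, mul_one,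
    smul_smul, hu]
  module

lemma quat_im_eq_self {u : ℍ[ℝ]} (h : u.re = 0) : Quaternion.im u = u := by
  have := Quaternion.re_add_im u
  rw [h] at this; simpa using this

lemma quat_im_one : Quaternion.im (1 : ℍ[ℝ]) = 0 := by
  rw [← Quaternion.coe_one]; exact Quaternion.im_coe 1

/-- Existence of the loop parameters realizing a given imaginary vertical gap. -/
lemma exists_loop_params (v : ℍ[ℝ]) (hv : v.re = 0) :
    ∃ (r : ℝ) (u : ℍ[ℝ]), u.re = 0 ∧ u * u = -1 ∧ v = (-(4*π*r^2)) • u := by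
  by_cases h : v = 0
  · exact ⟨0, ⟨0,1,0,0⟩, rfl, by show (⟨0,1,0,0⟩ : ℍ[ℝ]) * ⟨0,1,0,0⟩ = -1; ext <;> simp, by simp [h]; exact (zero_smul ℝ _).symm⟩
  · have hn : ‖v‖ ≠ 0 := norm_ne_zero_iff.2 h
    refine ⟨Real.sqrt (‖v‖ / (4*π)), (-‖v‖⁻¹) • v, by simp [hv], ?_, ?_⟩
    · have hsq : v * v = -((‖v‖ * ‖v‖ : ℝ) : ℍ[ℝ]) := by
        have := Quaternion.im_sq v
        rw [quat_im_eq_self hv] at this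
        rw [← sq, this, Quaternion.normSq_eq_norm_mul_self]
      rw [smul_mul_smul_comm, hsq]
      rw [smul_neg, ← Quaternion.coe_smul, smul_eq_mul]
      have : -‖v‖⁻¹ * -‖v‖⁻¹ * (‖v‖ * ‖v‖) = 1 := by field_simp
      rw [this, Quaternion.coe_one]
    · have hr2 : Real.sqrt (‖v‖ / (4*π)) ^ 2 = ‖v‖ / (4*π) := by
        rw [Real.sq_sqrt]; positivity
      rw [hr2, smul_smul]
      have hπ : (π:ℝ) ≠ 0 := Real.pi_ne_zero
      have : -(4 * π * (‖v‖ / (4 * π))) * -‖v‖⁻¹ = 1 := by field_simp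
      rw [this, one_smul]

section Pieces

variable (q0 q1 t0 : ℍ[ℝ]) (r : ℝ) (u A B : ℍ[ℝ])

/-- First piece: straight segment. -/
noncomputable def α₁ : ℝ → ℍ[ℝ] := fun l => q0 + (2*l) • (q1 - q0)

noncomputable def β₁ : ℝ → ℍ[ℝ] :=
  fun l => t0 - (4*l) • Quaternion.im ((q1 - q0) * star q0)

/-- Second piece: a circle in the plane spanned by `1` and `u`. -/
noncomputable def α₂ : ℝ → ℍ[ℝ] := fun l =>
  (q1 - (r:ℍ[ℝ])) + (r * Real.cos (4*π*(l-1/2))) • (1:ℍ[ℝ])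
    + (r * Real.sin (4*π*(l-1/2))) • u

noncomputable def β₂ : ℝ → ℍ[ℝ] := fun l =>
  t0 - (2:ℝ) • ((r * Real.cos (4*π*(l-1/2)) - r) • A + (r * Real.sin (4*π*(l-1/2))) • B)
    - (2*r^2*(4*π*(l-1/2))) • u

lemma hasDerivAt_α₁ (l : ℝ) : HasDerivAt (α₁ q0 q1) ((2:ℝ) • (q1 - q0)) l := by
  have : HasDerivAt (fun l : ℝ => 2*l) 2 l := by
    simpa using (hasDerivAt_id l).const_mul (2:ℝ)
  exact (this.smul_const _).const_add q0

lemma hasDerivAt_β₁ (l : ℝ) :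
    HasDerivAt (β₁ q0 q1 t0) ((-4:ℝ) • Quaternion.im ((q1 - q0) * star q0)) l := by
  have : HasDerivAt (fun l : ℝ => 4*l) 4 l := by
    simpa using (hasDerivAt_id l).const_mul (4:ℝ)
  have h := (this.smul_const (Quaternion.im ((q1 - q0) * star q0))).const_sub t0
  exact h.congr_deriv (by module)

lemma hasDerivAt_α₂ (l : ℝ) :
    HasDerivAt (α₂ q1 r u)
      ((r * (-Real.sin (4*π*(l-1/2))) * (4*π)) • (1:ℍ[ℝ])
        + (r * Real.cos (4*π*(l-1/2)) * (4*π)) • u) l := by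
  have hθ : HasDerivAt (fun l : ℝ => 4*π*(l-1/2)) (4*π) l := by
    simpa using ((hasDerivAt_id l).sub_const (1/2:ℝ)).const_mul (4*π)
  have hc : HasDerivAt (fun l => r * Real.cos (4*π*(l-1/2)))
      (r * (-Real.sin (4*π*(l-1/2))) * (4*π)) l := by
    have := ((Real.hasDerivAt_cos _).comp l hθ).const_mul r
    exact this.congr_deriv (by ring)
  have hs : HasDerivAt (fun l => r * Real.sin (4*π*(l-1/2)))
      (r * Real.cos (4*π*(l-1/2)) * (4*π)) l := by
    have := ((Real.hasDerivAt_sin _).comp l hθ).const_mul r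
    exact this.congr_deriv (by ring)
  exact ((hc.smul_const _).const_add _).add (hs.smul_const u)

lemma hasDerivAt_β₂ (l : ℝ) :
    HasDerivAt (β₂ t0 r u A B)
      ((-2:ℝ) • ((r * (-Real.sin (4*π*(l-1/2))) * (4*π)) • A
          + (r * Real.cos (4*π*(l-1/2)) * (4*π)) • B)
        - (2*r^2*(4*π)) • u) l := by
  have hθ : HasDerivAt (fun l : ℝ => 4*π*(l-1/2)) (4*π) l := by
    simpa using ((hasDerivAt_id l).sub_const (1/2:ℝ)).const_mul (4*π)
  have hc : HasDerivAt (fun l => r * Real.cos (4*π*(l-1/2)) - r)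
      (r * (-Real.sin (4*π*(l-1/2))) * (4*π)) l := by
    have := (((Real.hasDerivAt_cos _).comp l hθ).const_mul r).sub_const r
    exact this.congr_deriv (by ring)
  have hs : HasDerivAt (fun l => r * Real.sin (4*π*(l-1/2)))
      (r * Real.cos (4*π*(l-1/2)) * (4*π)) l := by
    have := ((Real.hasDerivAt_sin _).comp l hθ).const_mul r
    exact this.congr_deriv (by ring)
  have hlin : HasDerivAt (fun l : ℝ => 2*r^2*(4*π*(l-1/2))) (2*r^2*(4*π)) l :=
    hθ.const_mul (2*r^2)
  have h := ((((hc.smul_const A).add (hs.smul_const B)).const_smul (2:ℝ)).const_sub t0).sub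
    (hlin.smul_const u)
  unfold β₂
  exact h.congr_deriv (by module)

/-- Horizontality identity for the first piece. -/
lemma horiz₁ (l : ℝ) :
    (-4:ℝ) • Quaternion.im ((q1 - q0) * star q0) =
      (-2 : ℝ) • Quaternion.im (((2:ℝ) • (q1 - q0)) * star (α₁ q0 q1 l)) := by
  have h0 : Quaternion.im ((q1 - q0) * star (q1 - q0)) = 0 := by
    rw [Quaternion.mul_star_eq_coe]; exact Quaternion.im_coe _
  have hexp : ((2:ℝ) • (q1-q0)) * star (α₁ q0 q1 l)
      = (2:ℝ) • ((q1-q0) * star q0) + (2*l*2) • ((q1-q0) * star (q1-q0)) := by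
    simp only [α₁, star_add, Quaternion.star_smul, mul_add, smul_mul_assoc, mul_smul_comm,
      smul_smul]
  rw [hexp]
  simp only [Quaternion.im_add, Quaternion.im_smul, h0, smul_zero, add_zero]
  module

/-- Horizontality identity for the second piece. -/
lemma horiz₂ (hure : u.re = 0) (huu : u * u = -1) (l : ℝ) :
    ((-2:ℝ) • ((r * (-Real.sin (4*π*(l-1/2))) * (4*π)) • Quaternion.im (star (q1 - (r:ℍ[ℝ])))
          + (r * Real.cos (4*π*(l-1/2)) * (4*π)) • Quaternion.im (u * star (q1 - (r:ℍ[ℝ]))))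
        - (2*r^2*(4*π)) • u) =
      (-2 : ℝ) • Quaternion.im
        (((r * (-Real.sin (4*π*(l-1/2))) * (4*π)) • (1:ℍ[ℝ])
          + (r * Real.cos (4*π*(l-1/2)) * (4*π)) • u) * star (α₂ q1 r u l)) := by
  have hsu : star u = -u := star_eq_neg.2 hure
  have hstar : star (α₂ q1 r u l) = star (q1 - (r:ℍ[ℝ]))
      + (r * Real.cos (4*π*(l-1/2))) • (1:ℍ[ℝ]) - (r * Real.sin (4*π*(l-1/2))) • u := by
    unfold α₂
    rw [star_add, star_add, Quaternion.star_smul, Quaternion.star_smul, star_one, hsu,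
      smul_neg, ← sub_eq_add_neg]
  rw [hstar, quat_mul_expand _ _ _ _ _ _ huu]
  have h1 : r * (-Real.sin (4*π*(l-1/2))) * (4*π) * (r * Real.cos (4*π*(l-1/2)))
      + r * Real.cos (4*π*(l-1/2)) * (4*π) * (r * Real.sin (4*π*(l-1/2))) = 0 := by ring
  have h2 : r * Real.cos (4*π*(l-1/2)) * (4*π) * (r * Real.cos (4*π*(l-1/2)))
      - r * (-Real.sin (4*π*(l-1/2))) * (4*π) * (r * Real.sin (4*π*(l-1/2)))
      = r^2*(4*π) * (Real.sin (4*π*(l-1/2))^2 + Real.cos (4*π*(l-1/2))^2) := by ring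
  rw [h1, h2, Real.sin_sq_add_cos_sq, mul_one]
  simp only [Quaternion.im_add, Quaternion.im_smul, quat_im_one, smul_zero, add_zero,
    quat_im_eq_self hure, zero_smul]
  rw [smul_add (-2:ℝ) _ ((r^2*(4*π)) • u), smul_smul, sub_eq_add_neg, ← neg_smul]; congr 2; ring

end Pieces

/-- Any two points of the quaternionic Heisenberg group `ℍ × Im ℍ` can be joined
by a piecewise-C¹ horizontal curve `γ : [0,1] → ℍ × Im ℍ`. -/
theorem exists_horizontal_curve_joining (P P' : ℍ[ℝ] × ℍ[ℝ])
    (hP : P.2.re = 0) (hP' : P'.2.re = 0) :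
    ∃ α β : ℝ → ℍ[ℝ], IsPiecewiseHorizontal α β 0 1 ∧
      (α 0, β 0) = P ∧ (α 1, β 1) = P' := by
  obtain ⟨q0, t0⟩ := P
  obtain ⟨q1, t1⟩ := P'
  simp only at hP hP' ⊢
  set J : ℍ[ℝ] := Quaternion.im ((q1 - q0) * star q0) with hJ
  have hvre : (t1 - (t0 - (2:ℝ) • J)).re = 0 := by simp [hP, hP', hJ]
  obtain ⟨r, u, hure, huu, hvu⟩ := exists_loop_params _ hvre
  set A : ℍ[ℝ] := Quaternion.im (star (q1 - (r:ℍ[ℝ]))) with hA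
  set B : ℍ[ℝ] := Quaternion.im (u * star (q1 - (r:ℍ[ℝ]))) with hB
  set t0' : ℍ[ℝ] := t0 - (2:ℝ) • J with ht0'
  set α : ℝ → ℍ[ℝ] := fun l => if l ≤ 1/2 then α₁ q0 q1 l else α₂ q1 r u l with hα
  set β : ℝ → ℍ[ℝ] := fun l => if l ≤ 1/2 then β₁ q0 q1 t0 l else β₂ t0' r u A B l with hβ
  -- matching at 1/2
  have hα12 : α₁ q0 q1 (1/2) = α₂ q1 r u (1/2) := by
    simp [α₁, α₂, quat_smul_one_coe]
  have hβ12 : β₁ q0 q1 t0 (1/2) = β₂ t0' r u A B (1/2) := by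
    simp [β₁, β₂, ht0', hJ]
    norm_num
  -- continuity of the pieces
  have hcα₁ : Continuous (α₁ q0 q1) := by unfold α₁; fun_prop
  have hcβ₁ : Continuous (β₁ q0 q1 t0) := by unfold β₁; fun_prop
  have hcα₂ : Continuous (α₂ q1 r u) := by unfold α₂; fun_prop
  have hcβ₂ : Continuous (β₂ t0' r u A B) := by unfold β₂; fun_prop
  have hcα : Continuous α := by
    apply Continuous.if_le hcα₁ hcα₂ continuous_id continuous_const
    intro x hx; simp only [id] at hx; rw [hx, hα12]
  have hcβ : Continuous β := by
    apply Continuous.if_le hcβ₁ hcβ₂ continuous_id continuous_const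
    intro x hx; simp only [id] at hx; rw [hx, hβ12]
  refine ⟨α, β, ⟨(hcα.prodMk hcβ).continuousOn, ?_, {(1/2 : ℝ)}, ?_, ?_⟩, ?_, ?_⟩
  · -- imaginary values
    intro l _
    by_cases h : l ≤ 1/2
    · rw [hβ]; simp only [if_pos h]
      simp [β₁, hJ, hP]
    · rw [hβ]; simp only [if_neg h]
      simp [β₂, ht0', hJ, hA, hB, hP, hure]
  · -- horizontality
    intro l _ hlF
    have hl : l ≠ 1/2 := by simpa using hlF
    rcases lt_or_gt_of_ne hl with hlt | hgt
    · have hev : α =ᶠ[nhds l] α₁ q0 q1 := by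
        filter_upwards [Iio_mem_nhds hlt] with x hx
        have hx' : x ≤ 1/2 := (mem_Iio.mp hx).le
        simp only [hα]; exact if_pos hx'
      have hevβ : β =ᶠ[nhds l] β₁ q0 q1 t0 := by
        filter_upwards [Iio_mem_nhds hlt] with x hx
        have hx' : x ≤ 1/2 := (mem_Iio.mp hx).le
        simp only [hβ]; exact if_pos hx'
      refine ⟨(2:ℝ) • (q1 - q0), (-4:ℝ) • J, ?_, ?_, ?_⟩
      · exact (hasDerivAt_α₁ q0 q1 l).congr_of_eventuallyEq hev
      · exact (hasDerivAt_β₁ q0 q1 t0 l).congr_of_eventuallyEq hevβ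
      · rw [show α l = α₁ q0 q1 l by simp only [hα]; exact if_pos hlt.le]
        exact horiz₁ q0 q1 l
    · have hev : α =ᶠ[nhds l] α₂ q1 r u := by
        filter_upwards [Ioi_mem_nhds hgt] with x hx
        have hx' : ¬ x ≤ 1/2 := not_le.2 (mem_Ioi.mp hx)
        simp only [hα]; exact if_neg hx'
      have hevβ : β =ᶠ[nhds l] β₂ t0' r u A B := by
        filter_upwards [Ioi_mem_nhds hgt] with x hx
        have hx' : ¬ x ≤ 1/2 := not_le.2 (mem_Ioi.mp hx)
        simp only [hβ]; exact if_neg hx'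
      refine ⟨_, _, (hasDerivAt_α₂ q1 r u l).congr_of_eventuallyEq hev,
        (hasDerivAt_β₂ t0' r u A B l).congr_of_eventuallyEq hevβ, ?_⟩
      rw [show α l = α₂ q1 r u l by simp only [hα]; exact if_neg (not_le.2 hgt)]
      rw [hA, hB]
      exact horiz₂ q1 r u hure huu l
  · -- continuity of deriv α away from 1/2
    intro l hl
    have hl' : l ≠ 1/2 := by
      intro h; exact hl.2 (by simp [h])
    apply ContinuousAt.continuousWithinAt
    rcases lt_or_gt_of_ne hl' with hlt | hgt
    · have hev : α =ᶠ[nhds l] α₁ q0 q1 := by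
        filter_upwards [Iio_mem_nhds hlt] with x hx
        have hx' : x ≤ 1/2 := (mem_Iio.mp hx).le
        simp only [hα]; exact if_pos hx'
      apply ContinuousAt.congr _ hev.deriv.symm
      have : deriv (α₁ q0 q1) = fun _ => (2:ℝ) • (q1 - q0) := by
        funext x; exact (hasDerivAt_α₁ q0 q1 x).deriv
      rw [this]; exact continuousAt_const
    · have hev : α =ᶠ[nhds l] α₂ q1 r u := by
        filter_upwards [Ioi_mem_nhds hgt] with x hx
        have hx' : ¬ x ≤ 1/2 := not_le.2 (mem_Ioi.mp hx)
        simp only [hα]; exact if_neg hx'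
      apply ContinuousAt.congr _ hev.deriv.symm
      have : deriv (α₂ q1 r u) = fun x =>
          (r * (-Real.sin (4*π*(x-1/2))) * (4*π)) • (1:ℍ[ℝ])
            + (r * Real.cos (4*π*(x-1/2)) * (4*π)) • u := by
        funext x; exact (hasDerivAt_α₂ q1 r u x).deriv
      rw [this]
      apply Continuous.continuousAt
      fun_prop
  · -- start point
    have h0 : (0:ℝ) ≤ 1/2 := by norm_num
    simp [hα, hβ, h0, α₁, β₁]
  · -- end point
    have h1 : ¬ ((1:ℝ) ≤ 1/2) := by norm_num
    have hθ1 : 4*π*((1:ℝ)-1/2) = 2*π := by ring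
    rw [Prod.mk.injEq]
    refine ⟨?_, ?_⟩
    · simp only [hα, h1, if_false, α₂, hθ1, Real.cos_two_pi, Real.sin_two_pi, mul_one,
        mul_zero, zero_smul, add_zero, quat_smul_one_coe]
      abel
    · simp only [hβ, h1, if_false, β₂, hθ1, Real.cos_two_pi, Real.sin_two_pi, mul_one,
        mul_zero, zero_smul, add_zero, sub_self, smul_zero, zero_add, sub_zero]
      have hvu' : t1 = t0' + (-(4*π*r^2)) • u := by
        rw [← hvu]; abel
      rw [hvu']
      module
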